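/- For every S ≥ 1 and all u, v ∈ ℝ^S, one has ū − v̄ ≺_c u − v̄, where ū and v̄ denote the sorted versions of u and v respectively. -/

import Mathlib

open Finset

/-- The nondecreasing rearrangement of a finite real vector. -/
noncomputable def sortVec {S : ℕ} (u : Fin S → ℝ) : Fin S → ℝ := u ∘ Tuple.sort u

/-- The Schur-convex semi-ordering `≺_c` : equal total sums, and each tail sum
(from the second coordinate on) of the sorted version of `u` is dominated by that of `v`. -/
def schurLE {S : ℕ} (u v : Fin S → ℝ) : Prop :=
  (∑ i, u i = ∑ i, v i) ∧
  ∀ k : Fin S, 1 ≤ (k : ℕ) →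
    ∑ i ∈ Finset.Ici k, sortVec u i ≤ ∑ i ∈ Finset.Ici k, sortVec v i

/-- The semi-ordering `≺_*` : every tail sum of `u` is dominated by that of `v`. -/
def starLE {S : ℕ} (u v : Fin S → ℝ) : Prop :=
  ∀ k : Fin S, ∑ i ∈ Finset.Ici k, u i ≤ ∑ i ∈ Finset.Ici k, v i

/-- The semi-ordering `≺_P` : `u ≺_* v` and `u(ℓ) ≤ v(ℓ)` for every `ℓ ≥ P`. -/
def precP {S : ℕ} (P : Fin S) (u v : Fin S → ℝ) : Prop :=
  starLE u v ∧ ∀ ℓ : Fin S, P ≤ ℓ → u ℓ ≤ v ℓ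

/-- The map `G̃^P : u ↦ sort([u + σ·e_P − ξ·1]⁺)`.  For `P` the first index,
this is the Kiefer–Wolfowitz map `G`. -/
noncomputable def GP {S : ℕ} (σ ξ : ℝ) (P : Fin S) (u : Fin S → ℝ) : Fin S → ℝ :=
  sortVec (fun i => max (u i + (if i = P then σ else 0) - ξ) 0)


lemma monotone_sortVec {S : ℕ} (u : Fin S → ℝ) : Monotone (sortVec u) :=
  Tuple.monotone_sort u

lemma sum_comp_sortVec {S : ℕ} (w : Fin S → ℝ) (F : ℝ → ℝ) :
    ∑ i, F (sortVec w i) = ∑ i, F (w i) :=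
  Equiv.sum_comp (Tuple.sort w) (fun j => F (w j))

lemma max4 {a b c d : ℝ} (hab : a ≤ b) (hcd : c ≤ d) :
    max (a - c) 0 + max (b - d) 0 ≤ max (a - d) 0 + max (b - c) 0 := by
  simp only [max_def]
  split_ifs <;> linarith

lemma perm_eq_id_of_monotone {S : ℕ} (π : Equiv.Perm (Fin S)) (h : Monotone ⇑π) :
    ∀ i, π i = i := by
  have hsm : StrictMono ⇑π := h.strictMono_of_injective π.injective
  have hle : ∀ j ∈ (univ : Finset (Fin S)), (j : ℕ) ≤ ((π j : Fin S) : ℕ) := by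
    intro j _
    haveI : WellFoundedLT (Fin S) := inferInstance
    have h : j ≤ π j := hsm.le_apply
    exact h
  have hsum : ∑ j : Fin S, (j : ℕ) = ∑ j : Fin S, ((π j : Fin S) : ℕ) :=
    (Equiv.sum_comp π (fun j : Fin S => (j : ℕ))).symm
  intro i
  have h2 := (Finset.sum_eq_sum_iff_of_le hle).mp hsum i (mem_univ i)
  exact Fin.ext h2.symm

lemma rearr {S : ℕ} (x y : Fin S → ℝ) (hx : Monotone x) (hy : Monotone y)
    (π : Equiv.Perm (Fin S)) :
    ∑ i, max (x i - y i) 0 ≤ ∑ i, max (x (π i) - y i) 0 := by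
  suffices H : ∀ (n : ℕ) (π : Equiv.Perm (Fin S)),
      S * S * S - (∑ j, ((π j : Fin S) : ℕ) * (j : ℕ)) = n →
      ∑ i, max (x i - y i) 0 ≤ ∑ i, max (x (π i) - y i) 0 by
    exact H _ π rfl
  intro n
  induction n using Nat.strong_induction_on with
  | _ n IH =>
    intro π hn
    by_cases hπ : ∀ i, π i = i
    · simp only [hπ]
      exact le_rfl
    · have hS : 0 < S := by
        obtain ⟨i, _⟩ := not_forall.mp hπ
        exact i.pos
      have hmono : ¬ Monotone ⇑π := fun hm => hπ (perm_eq_id_of_monotone π hm)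
      rw [Monotone] at hmono
      push_neg at hmono
      obtain ⟨a, b, hab, hpba⟩ := hmono
      have hablt : a < b :=
        lt_of_le_of_ne hab (by rintro rfl; exact absurd hpba (lt_irrefl _))
      set s : Equiv.Perm (Fin S) := Equiv.swap a b with hs
      set π' : Equiv.Perm (Fin S) := π * s with hπ'
      have hab' : a ≠ b := ne_of_lt hablt
      have hsa : s a = b := Equiv.swap_apply_left a b
      have hsb : s b = a := Equiv.swap_apply_right a b
      have hsoth : ∀ j, j ≠ a → j ≠ b → s j = j := fun j h1 h2 =>
        Equiv.swap_apply_of_ne_of_ne h1 h2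
      have e1 : π' a = π b := by rw [hπ', Equiv.Perm.mul_apply, hsa]
      have e2 : π' b = π a := by rw [hπ', Equiv.Perm.mul_apply, hsb]
      have eoth : ∀ j, j ≠ a → j ≠ b → π' j = π j := by
        intro j h1 h2
        rw [hπ', Equiv.Perm.mul_apply, hsoth j h1 h2]
      -- measure strictly increases
      have hMlt : (∑ j, ((π j : Fin S) : ℕ) * (j : ℕ)) <
          (∑ j, ((π' j : Fin S) : ℕ) * (j : ℕ)) := by
        have hsplit : ∀ g : Fin S → ℕ, ∑ j, g j =
            ∑ j ∈ (univ : Finset (Fin S)) \ {a, b}, g j + (g a + g b) := by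
          intro g
          rw [← Finset.sum_pair hab', Finset.sum_sdiff (Finset.subset_univ _)]
        rw [hsplit, hsplit]
        have hoth : ∀ j ∈ (univ : Finset (Fin S)) \ {a, b},
            ((π j : Fin S) : ℕ) * (j : ℕ) = ((π' j : Fin S) : ℕ) * (j : ℕ) := by
          intro j hj
          simp only [Finset.mem_sdiff, Finset.mem_insert, Finset.mem_singleton] at hj
          push_neg at hj
          rw [eoth j hj.2.1 hj.2.2]
        rw [Finset.sum_congr rfl hoth]
        apply Nat.add_lt_add_left
        rw [e1, e2]
        have h1 : ((π b : Fin S) : ℕ) < ((π a : Fin S) : ℕ) := hpba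
        have h2 : (a : ℕ) < (b : ℕ) := hablt
        zify
        nlinarith
      have hMub : (∑ j, ((π' j : Fin S) : ℕ) * (j : ℕ)) < S * S * S := by
        calc (∑ j, ((π' j : Fin S) : ℕ) * (j : ℕ))
            < ∑ _j : Fin S, S * S := by
              apply Finset.sum_lt_sum_of_nonempty ⟨⟨0, hS⟩, Finset.mem_univ _⟩
              intro j _
              exact Nat.mul_lt_mul_of_lt_of_lt (π' j).isLt j.isLt
          _ = S * S * S := by
              rw [Finset.sum_const, Finset.card_univ, Fintype.card_fin, smul_eq_mul]
              ring
      have hlt : S * S * S - (∑ j, ((π' j : Fin S) : ℕ) * (j : ℕ)) < n := by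
        rw [← hn]
        exact Nat.sub_lt_sub_left (lt_trans hMlt hMub) hMlt
      have hIH := IH _ hlt π' rfl
      refine hIH.trans ?_
      have hsplit : ∀ g : Fin S → ℝ, ∑ j, g j =
          ∑ j ∈ (univ : Finset (Fin S)) \ {a, b}, g j + (g a + g b) := by
        intro g
        rw [← Finset.sum_pair hab', Finset.sum_sdiff (Finset.subset_univ _)]
      rw [hsplit, hsplit]
      have hoth : ∀ j ∈ (univ : Finset (Fin S)) \ {a, b},
          max (x (π' j) - y j) 0 = max (x (π j) - y j) 0 := by
        intro j hj
        simp only [Finset.mem_sdiff, Finset.mem_insert, Finset.mem_singleton] at hj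
        push_neg at hj
        rw [eoth j hj.2.1 hj.2.2]
      rw [Finset.sum_congr rfl hoth]
      apply add_le_add_right
      rw [e1, e2]
      linarith [max4 (hx hpba.le) (hy hablt.le)]

theorem schurLE_sortVec_sub_aux {S : ℕ} (hS : 1 ≤ S) (u v : Fin S → ℝ) :
    (∑ i, (sortVec u i - sortVec v i) = ∑ i, (u i - sortVec v i)) ∧
    ∀ k : Fin S, 1 ≤ (k : ℕ) →
      ∑ i ∈ Finset.Ici k, sortVec (fun i => sortVec u i - sortVec v i) i ≤
      ∑ i ∈ Finset.Ici k, sortVec (fun i => u i - sortVec v i) i := by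
  constructor
  · have h : ∑ i, sortVec u i = ∑ i, u i := Equiv.sum_comp (Tuple.sort u) u
    rw [Finset.sum_sub_distrib, Finset.sum_sub_distrib, h]
  · intro k _
    set w₁ : Fin S → ℝ := fun i => sortVec u i - sortVec v i with hw₁
    set w₂ : Fin S → ℝ := fun i => u i - sortVec v i with hw₂
    set t : ℝ := sortVec w₂ k with ht
    have hinv : ∀ i, sortVec u ((Tuple.sort u)⁻¹ i) = u i := fun i =>
      congrArg u (Equiv.apply_symm_apply (Tuple.sort u) i)
    have hkey : ∑ i, max (w₁ i - t) 0 ≤ ∑ i, max (w₂ i - t) 0 := by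
      have h := rearr (sortVec u) (fun i => sortVec v i + t) (monotone_sortVec u)
        (fun i j hij => by simpa using monotone_sortVec v hij) (Tuple.sort u)⁻¹
      calc ∑ i, max (w₁ i - t) 0
          = ∑ i, max (sortVec u i - (sortVec v i + t)) 0 := by
            apply Finset.sum_congr rfl
            intro i _
            congr 1
            rw [hw₁]
            ring
        _ ≤ ∑ i, max (sortVec u ((Tuple.sort u)⁻¹ i) - (sortVec v i + t)) 0 := h
        _ = ∑ i, max (w₂ i - t) 0 := by
            apply Finset.sum_congr rfl
            intro i _
            rw [hinv i]
            congr 1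
            rw [hw₂]
            ring
    calc ∑ i ∈ Finset.Ici k, sortVec w₁ i
        ≤ ∑ i ∈ Finset.Ici k, (t + max (sortVec w₁ i - t) 0) := by
          apply Finset.sum_le_sum
          intro i _
          have := le_max_left (sortVec w₁ i - t) 0
          linarith
      _ = ∑ _i ∈ Finset.Ici k, t + ∑ i ∈ Finset.Ici k, max (sortVec w₁ i - t) 0 := by
          rw [Finset.sum_add_distrib]
      _ ≤ ∑ _i ∈ Finset.Ici k, t + ∑ i, max (sortVec w₁ i - t) 0 := by
          apply add_le_add_right
          apply Finset.sum_le_sum_of_subset_of_nonneg (Finset.subset_univ _)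
          intro i _ _
          exact le_max_right _ _
      _ = ∑ _i ∈ Finset.Ici k, t + ∑ i, max (w₁ i - t) 0 := by
          rw [sum_comp_sortVec w₁ (fun r => max (r - t) 0)]
      _ ≤ ∑ _i ∈ Finset.Ici k, t + ∑ i, max (w₂ i - t) 0 := add_le_add_right hkey _
      _ = ∑ _i ∈ Finset.Ici k, t + ∑ i, max (sortVec w₂ i - t) 0 := by
          rw [sum_comp_sortVec w₂ (fun r => max (r - t) 0)]
      _ = ∑ _i ∈ Finset.Ici k, t + ∑ i ∈ Finset.Ici k, max (sortVec w₂ i - t) 0 := by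
          congr 1
          refine (Finset.sum_subset (Finset.subset_univ _) ?_).symm
          intro i _ hi
          rw [Finset.mem_Ici] at hi
          push_neg at hi
          have h2 : sortVec w₂ i ≤ t := monotone_sortVec w₂ hi.le
          rw [max_eq_right (by linarith)]
      _ = ∑ i ∈ Finset.Ici k, (t + max (sortVec w₂ i - t) 0) := by
          rw [Finset.sum_add_distrib]
      _ = ∑ i ∈ Finset.Ici k, sortVec w₂ i := by
          apply Finset.sum_congr rfl
          intro i hi
          rw [Finset.mem_Ici] at hi
          have h2 : t ≤ sortVec w₂ i := monotone_sortVec w₂ hi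
          rw [max_eq_left (by linarith)]
          ring

/-- `ū − v̄ ≺_c u − v̄`. -/
theorem schurLE_sortVec_sub {S : ℕ} (hS : 1 ≤ S) (u v : Fin S → ℝ) :
    schurLE (fun i => sortVec u i - sortVec v i) (fun i => u i - sortVec v i) :=
  schurLE_sortVec_sub_aux hS u v
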